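/- Let D ≥ 1, σ > 0, v ∈ ℝ^D a unit vector, Φ ∈ ℝ^{D×D}, and Ω* = (1/σ²)((v vᵀ)/(σ² + 1) − I). Let ξ be a standard real Gaussian random variable and ε a random vector in ℝ^D with independent standard Gaussian coordinates, with ξ and ε independent. Define the random vectors q = ξ v + σ ε and p = Φᵀ( Ω* q + ε/σ ). Then E[ q qᵀ ] = v vᵀ + σ² I and E[ p pᵀ ] = (1 / (σ² (σ² + 1))) · Φᵀ v vᵀ Φ. -/

import Mathlib

open Matrix MeasureTheory ProbabilityTheory

open scoped ENNReal NNReal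
open Real Filter
lemma aux_int_exp : Integrable (fun x : ℝ => Real.exp (-(2:ℝ)⁻¹ * x ^ 2)) :=
  integrable_exp_neg_mul_sq (by norm_num)

lemma aux_int_x_exp : Integrable (fun x : ℝ => x * Real.exp (-(2:ℝ)⁻¹ * x ^ 2)) :=
  integrable_mul_exp_neg_mul_sq (by norm_num)

lemma aux_int_x2_exp : Integrable (fun x : ℝ => x ^ 2 * Real.exp (-(2:ℝ)⁻¹ * x ^ 2)) := by
  have := integrable_rpow_mul_exp_neg_mul_sq (b := (2:ℝ)⁻¹) (by norm_num) (s := 2) (by norm_num)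
  simpa [Real.rpow_two] using this

lemma aux_integral_x_exp : ∫ x : ℝ, x * Real.exp (-(2:ℝ)⁻¹ * x ^ 2) = 0 := by
  apply integral_eq_zero_of_hasDerivAt_of_integrable
    (f := fun x : ℝ => -Real.exp (-(2:ℝ)⁻¹ * x ^ 2))
  · intro x
    have h1 : HasDerivAt (fun x : ℝ => -(2:ℝ)⁻¹ * x ^ 2) (-(2:ℝ)⁻¹ * (2 * x)) x := by
      simpa using ((hasDerivAt_pow 2 x).const_mul (-(2:ℝ)⁻¹))
    have h2 := (h1.exp).neg
    convert h2 using 1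
    · rfl
    ring
  · exact aux_int_x_exp
  · exact aux_int_exp.neg

lemma aux_integral_exp : ∫ x : ℝ, Real.exp (-(2:ℝ)⁻¹ * x ^ 2) = Real.sqrt (2 * π) := by
  have := integral_gaussian (2:ℝ)⁻¹
  rw [show π / (2:ℝ)⁻¹ = 2 * π by field_simp] at this
  exact this

lemma aux_integral_x2_exp : ∫ x : ℝ, x ^ 2 * Real.exp (-(2:ℝ)⁻¹ * x ^ 2) = Real.sqrt (2 * π) := by
  have h0 : ∫ x : ℝ, (x ^ 2 * Real.exp (-(2:ℝ)⁻¹ * x ^ 2) - Real.exp (-(2:ℝ)⁻¹ * x ^ 2)) = 0 := by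
    apply integral_eq_zero_of_hasDerivAt_of_integrable
      (f := fun x : ℝ => -(x * Real.exp (-(2:ℝ)⁻¹ * x ^ 2)))
    · intro x
      have h1 : HasDerivAt (fun x : ℝ => -(2:ℝ)⁻¹ * x ^ 2) (-(2:ℝ)⁻¹ * (2 * x)) x := by
        simpa using ((hasDerivAt_pow 2 x).const_mul (-(2:ℝ)⁻¹))
      have h2 := ((hasDerivAt_id x).mul h1.exp).neg
      convert h2 using 1
      · rfl
      simp only [id_eq]
      ring
    · exact aux_int_x2_exp.sub aux_int_exp
    · exact aux_int_x_exp.neg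
  have := integral_sub aux_int_x2_exp aux_int_exp
  rw [this] at h0
  rw [aux_integral_exp] at h0
  linarith

lemma aux_pdf01 : gaussianPDFReal 0 1 =
    fun x => (Real.sqrt (2 * π))⁻¹ * Real.exp (-(2:ℝ)⁻¹ * x ^ 2) := by
  funext x
  unfold gaussianPDFReal
  rw [NNReal.coe_one, mul_one, sub_zero]
  congr 1
  ring

lemma aux_gauss_withDensity : gaussianReal 0 1 =
    volume.withDensity (fun x => ((gaussianPDFReal 0 1 x).toNNReal : ℝ≥0∞)) := by
  rw [gaussianReal_of_var_ne_zero 0 one_ne_zero]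
  congr 1

lemma aux_integral_gauss (g : ℝ → ℝ) :
    ∫ x, g x ∂(gaussianReal 0 1) = ∫ x, gaussianPDFReal 0 1 x * g x := by
  rw [aux_gauss_withDensity,
    integral_withDensity_eq_integral_smul ((measurable_gaussianPDFReal 0 1).real_toNNReal) g]
  congr 1
  funext x
  rw [NNReal.smul_def, smul_eq_mul, Real.coe_toNNReal _ (gaussianPDFReal_nonneg 0 1 x)]

lemma aux_integrable_gauss {g : ℝ → ℝ}
    (h : Integrable (fun x => gaussianPDFReal 0 1 x * g x)) :
    Integrable g (gaussianReal 0 1) := by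
  rw [aux_gauss_withDensity,
    integrable_withDensity_iff_integrable_smul ((measurable_gaussianPDFReal 0 1).real_toNNReal)]
  convert h using 2 with x
  · rfl
  rw [NNReal.smul_def, smul_eq_mul, Real.coe_toNNReal _ (gaussianPDFReal_nonneg 0 1 x)]

lemma aux_sqrt_ne : Real.sqrt (2 * π) ≠ 0 := by
  positivity

lemma aux_N_int_id : Integrable (fun x : ℝ => x) (gaussianReal 0 1) := by
  apply aux_integrable_gauss
  rw [aux_pdf01]
  simpa [mul_assoc, mul_comm] using aux_int_x_exp.const_mul (Real.sqrt (2 * π))⁻¹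

lemma aux_N_int_sq : Integrable (fun x : ℝ => x ^ 2) (gaussianReal 0 1) := by
  apply aux_integrable_gauss
  rw [aux_pdf01]
  have h2 : (fun x : ℝ => (fun x : ℝ => (Real.sqrt (2 * π))⁻¹ * Real.exp (-(2:ℝ)⁻¹ * x ^ 2)) x * x ^ 2)
      = fun x : ℝ => (Real.sqrt (2 * π))⁻¹ * (x ^ 2 * Real.exp (-(2:ℝ)⁻¹ * x ^ 2)) :=
    funext fun x => by ring
  rw [h2]
  exact aux_int_x2_exp.const_mul _

lemma aux_N_m1 : ∫ x, x ∂(gaussianReal 0 1) = 0 := by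
  rw [aux_integral_gauss, aux_pdf01]
  have : ∀ x : ℝ, (Real.sqrt (2 * π))⁻¹ * Real.exp (-(2:ℝ)⁻¹ * x ^ 2) * x
      = (Real.sqrt (2 * π))⁻¹ * (x * Real.exp (-(2:ℝ)⁻¹ * x ^ 2)) := fun x => by ring
  simp_rw [this]
  rw [integral_const_mul, aux_integral_x_exp, mul_zero]

lemma aux_N_m2 : ∫ x, x ^ 2 ∂(gaussianReal 0 1) = 1 := by
  rw [aux_integral_gauss, aux_pdf01]
  have : ∀ x : ℝ, (Real.sqrt (2 * π))⁻¹ * Real.exp (-(2:ℝ)⁻¹ * x ^ 2) * x ^ 2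
      = (Real.sqrt (2 * π))⁻¹ * (x ^ 2 * Real.exp (-(2:ℝ)⁻¹ * x ^ 2)) := fun x => by ring
  simp_rw [this]
  rw [integral_const_mul, aux_integral_x2_exp, inv_mul_cancel₀ aux_sqrt_ne]

lemma aux_moments {Ω : Type*} [MeasurableSpace Ω] {P : Measure Ω} {X : Ω → ℝ}
    (hm : Measurable X) (hmap : Measure.map X P = gaussianReal 0 1) :
    Integrable X P ∧ Integrable (fun ω => X ω ^ 2) P ∧
      (∫ ω, X ω ∂P) = 0 ∧ (∫ ω, X ω ^ 2 ∂P) = 1 := by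
  have hsq : AEStronglyMeasurable (fun x : ℝ => x ^ 2) (Measure.map X P) :=
    (measurable_id.pow_const 2).aestronglyMeasurable
  have hid : AEStronglyMeasurable (fun x : ℝ => x) (Measure.map X P) :=
    measurable_id.aestronglyMeasurable
  refine ⟨?_, ?_, ?_, ?_⟩
  · exact (integrable_map_measure hid hm.aemeasurable).mp (by rw [hmap]; exact aux_N_int_id)
  · exact (integrable_map_measure hsq hm.aemeasurable).mp (by rw [hmap]; exact aux_N_int_sq)
  · have := integral_map hm.aemeasurable hid
    rw [hmap] at this
    rw [← this, aux_N_m1]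
  · have := integral_map hm.aemeasurable hsq
    rw [hmap] at this
    rw [← this, aux_N_m2]

lemma aux_vecMulVec_mulVec {D : ℕ} (v w x : Fin D → ℝ) :
    vecMulVec v w *ᵥ x = (w ⬝ᵥ x) • v := by
  funext i
  simp only [mulVec, dotProduct, vecMulVec_apply, Pi.smul_apply, smul_eq_mul]
  rw [Finset.sum_mul]
  exact Finset.sum_congr rfl fun k _ => by ring

/-- Second moments of the per-sample stochastic gradient factors at the optimum of linear DSM:
for `q = ξ v + σ ε` and `p = Φᵀ(Ω* q + ε/σ)` with `Ω* = (1/σ²)((v vᵀ)/(σ²+1) − I)`,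
`E[q qᵀ] = v vᵀ + σ² I` and `E[p pᵀ] = (1/(σ²(σ²+1))) Φᵀ v vᵀ Φ`. -/
theorem stmt9 (D : ℕ) (hD : 1 ≤ D) (σ : ℝ) (hσ : 0 < σ)
    (v : Fin D → ℝ) (hv : ∑ i, v i ^ 2 = 1)
    (Φ : Matrix (Fin D) (Fin D) ℝ)
    (Ωstar : Matrix (Fin D) (Fin D) ℝ)
    (hΩstar : Ωstar = (σ ^ 2)⁻¹ • ((σ ^ 2 + 1)⁻¹ • vecMulVec v v - (1 : Matrix (Fin D) (Fin D) ℝ)))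
    {Ω : Type*} [MeasurableSpace Ω] (P : Measure Ω) [IsProbabilityMeasure P]
    (ξ : Ω → ℝ) (ε : Ω → Fin D → ℝ)
    (hξmeas : Measurable ξ) (hεmeas : Measurable ε)
    (hξ : Measure.map ξ P = gaussianReal 0 1)
    (hε : ∀ i, Measure.map (fun ω => ε ω i) P = gaussianReal 0 1)
    (hεindep : iIndepFun (fun i ω => ε ω i) P)
    (hindep : IndepFun ξ ε P)
    (q : Ω → Fin D → ℝ) (hq : ∀ ω, q ω = ξ ω • v + σ • ε ω)
    (p : Ω → Fin D → ℝ) (hp : ∀ ω, p ω = Φᵀ *ᵥ (Ωstar *ᵥ q ω + σ⁻¹ • ε ω)) :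
    (Matrix.of fun i j : Fin D => ∫ ω, q ω i * q ω j ∂P) =
      vecMulVec v v + σ ^ 2 • (1 : Matrix (Fin D) (Fin D) ℝ) ∧
    (Matrix.of fun i j : Fin D => ∫ ω, p ω i * p ω j ∂P) =
      (σ ^ 2 * (σ ^ 2 + 1))⁻¹ • (Φᵀ * vecMulVec v v * Φ) := by
  have hσ0 : σ ≠ 0 := ne_of_gt hσ
  have hσ1 : σ ^ 2 + 1 ≠ 0 := by positivity
  have hεimeas : ∀ i, Measurable (fun ω => ε ω i) :=
    fun i => (measurable_pi_apply i).comp hεmeas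
  obtain ⟨hξint, hξ2int, hξ0, hξ2⟩ := aux_moments hξmeas hξ
  have hεm := fun i => aux_moments (hεimeas i) (hε i)
  -- independence of ξ and each coordinate of ε
  have hξεindep : ∀ i, IndepFun ξ (fun ω => ε ω i) P :=
    fun i => hindep.comp measurable_id (measurable_pi_apply i)
  have hξεint : ∀ i, Integrable (fun ω => ξ ω * ε ω i) P := by
    intro i
    have := (hξεindep i).integrable_mul hξint (hεm i).1
    simpa [Pi.mul_def] using this
  have hξε : ∀ i, ∫ ω, ξ ω * ε ω i ∂P = 0 := by
    intro i
    have h := (hξεindep i).integral_mul_eq_mul_integral hξmeas.aestronglyMeasurable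
      (hεimeas i).aestronglyMeasurable
    rw [hξ0, zero_mul] at h
    simpa [Pi.mul_apply] using h
  have hεεint : ∀ i j, Integrable (fun ω => ε ω i * ε ω j) P := by
    intro i j
    by_cases h : i = j
    · subst h
      simpa [pow_two] using (hεm i).2.1
    · have := (hεindep.indepFun h).integrable_mul (hεm i).1 (hεm j).1
      simpa [Pi.mul_def] using this
  have hεε : ∀ i j, ∫ ω, ε ω i * ε ω j ∂P = if i = j then 1 else 0 := by
    intro i j
    by_cases h : i = j
    · subst h
      rw [if_pos rfl]
      simp_rw [← pow_two]
      exact (hεm i).2.2.2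
    · have hh := (hεindep.indepFun h).integral_mul_eq_mul_integral (hεimeas i).aestronglyMeasurable
        (hεimeas j).aestronglyMeasurable
      rw [(hεm i).2.2.1, zero_mul] at hh
      rw [if_neg h]
      simpa [Pi.mul_apply] using hh
  have hq' : ∀ ω i, q ω i = ξ ω * v i + σ * ε ω i := by
    intro ω i
    rw [hq]
    simp [smul_eq_mul]
  constructor
  · -- first moment matrix
    ext i j
    simp only [Matrix.of_apply]
    have e1 : ∀ ω, q ω i * q ω j = v i * v j * ξ ω ^ 2 + σ * v i * (ξ ω * ε ω j)
        + σ * v j * (ξ ω * ε ω i) + σ * σ * (ε ω i * ε ω j) := by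
      intro ω
      rw [hq' ω i, hq' ω j]
      ring
    simp only [e1]
    have i1 : Integrable (fun ω => v i * v j * ξ ω ^ 2) P := hξ2int.const_mul (v i * v j)
    have i2 : Integrable (fun ω => σ * v i * (ξ ω * ε ω j)) P := (hξεint j).const_mul (σ * v i)
    have i3 : Integrable (fun ω => σ * v j * (ξ ω * ε ω i)) P := (hξεint i).const_mul (σ * v j)
    have i4 : Integrable (fun ω => σ * σ * (ε ω i * ε ω j)) P := (hεεint i j).const_mul (σ * σ)
    have i12 : Integrable (fun ω => v i * v j * ξ ω ^ 2 + σ * v i * (ξ ω * ε ω j)) P := i1.add i2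
    have i123 : Integrable (fun ω => v i * v j * ξ ω ^ 2 + σ * v i * (ξ ω * ε ω j)
        + σ * v j * (ξ ω * ε ω i)) P := i12.add i3
    rw [integral_add i123 i4, integral_add i12 i3,
      integral_add i1 i2, integral_const_mul, integral_const_mul, integral_const_mul,
      integral_const_mul, hξ2, hξε j, hξε i, hεε i j]
    simp only [Matrix.add_apply, Matrix.smul_apply, vecMulVec_apply, Matrix.one_apply,
      smul_eq_mul]
    split_ifs <;> ring
  · -- second moment matrix for p
    -- algebraic form of p
    have hdot : v ⬝ᵥ v = 1 := by
      rw [dotProduct]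
      simpa [pow_two] using hv
    have hΩv : Ωstar *ᵥ v = (-(σ ^ 2 + 1)⁻¹) • v := by
      rw [hΩstar, smul_mulVec, sub_mulVec, one_mulVec, smul_mulVec,
        aux_vecMulVec_mulVec, hdot]
      funext i
      simp only [Pi.smul_apply, Pi.sub_apply, smul_eq_mul, one_smul]
      field_simp
      ring
    have hw : ∀ ω, Ωstar *ᵥ q ω + σ⁻¹ • ε ω
        = ((σ ^ 2 + 1)⁻¹ * (σ⁻¹ * (∑ k, v k * ε ω k) - ξ ω)) • v := by
      intro ω
      rw [hq, mulVec_add, mulVec_smul, mulVec_smul, hΩv, hΩstar, smul_mulVec,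
        sub_mulVec, one_mulVec, smul_mulVec, aux_vecMulVec_mulVec]
      funext i
      simp only [Pi.add_apply, Pi.smul_apply, Pi.sub_apply, smul_eq_mul, dotProduct]
      field_simp
      ring
    have hu : ∀ i, (Φᵀ *ᵥ v) i = ∑ k, Φ k i * v k := by
      intro i
      simp [mulVec, dotProduct, transpose_apply]
    have hpu : ∀ ω, p ω = ((σ ^ 2 + 1)⁻¹ * (σ⁻¹ * (∑ k, v k * ε ω k) - ξ ω)) • (Φᵀ *ᵥ v) := by
      intro ω
      rw [hp, hw, mulVec_smul]
    -- integrability of the quadratic pieces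
    have hSSrepr : (fun ω => (∑ k, v k * ε ω k) * (∑ k, v k * ε ω k))
        = fun ω => ∑ k, ∑ l, (v k * v l) * (ε ω k * ε ω l) := by
      funext ω
      rw [Finset.sum_mul_sum]
      exact Finset.sum_congr rfl fun k _ => Finset.sum_congr rfl fun l _ => by ring
    have hSSint : Integrable (fun ω => (∑ k, v k * ε ω k) * (∑ k, v k * ε ω k)) P := by
      rw [hSSrepr]
      exact integrable_finset_sum _ fun k _ =>
        integrable_finset_sum _ fun l _ => (hεεint k l).const_mul _
    have hSS : ∫ ω, (∑ k, v k * ε ω k) * (∑ k, v k * ε ω k) ∂P = 1 := by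
      rw [show (∫ ω, (∑ k, v k * ε ω k) * (∑ k, v k * ε ω k) ∂P)
          = ∫ ω, ∑ k, ∑ l, (v k * v l) * (ε ω k * ε ω l) ∂P from by rw [← hSSrepr]]
      rw [integral_finset_sum _ (fun k _ =>
        integrable_finset_sum _ fun l _ => (hεεint k l).const_mul _)]
      have h1 : ∀ k ∈ Finset.univ, (∫ ω, ∑ l, (v k * v l) * (ε ω k * ε ω l) ∂P)
          = v k * v k := by
        intro k _
        rw [integral_finset_sum _ (fun l _ => (hεεint k l).const_mul _)]
        have h2 : ∀ l ∈ Finset.univ, (∫ ω, (v k * v l) * (ε ω k * ε ω l) ∂P)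
            = (v k * v l) * (if k = l then 1 else 0) := by
          intro l _
          rw [integral_const_mul, hεε k l]
        rw [Finset.sum_congr rfl h2]
        simp
      rw [Finset.sum_congr rfl h1]
      rw [← hv]
      exact Finset.sum_congr rfl fun k _ => by ring
    have hSξrepr : (fun ω => (∑ k, v k * ε ω k) * ξ ω)
        = fun ω => ∑ k, v k * (ξ ω * ε ω k) := by
      funext ω
      rw [Finset.sum_mul]
      exact Finset.sum_congr rfl fun k _ => by ring
    have hSξint : Integrable (fun ω => (∑ k, v k * ε ω k) * ξ ω) P := by
      rw [hSξrepr]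
      exact integrable_finset_sum _ fun k _ => (hξεint k).const_mul _
    have hSξ : ∫ ω, (∑ k, v k * ε ω k) * ξ ω ∂P = 0 := by
      rw [show (∫ ω, (∑ k, v k * ε ω k) * ξ ω ∂P)
          = ∫ ω, ∑ k, v k * (ξ ω * ε ω k) ∂P from by rw [← hSξrepr]]
      rw [integral_finset_sum _ (fun k _ => (hξεint k).const_mul _)]
      have : ∀ k ∈ Finset.univ, (∫ ω, v k * (ξ ω * ε ω k) ∂P) = 0 := by
        intro k _
        rw [integral_const_mul, hξε k, mul_zero]
      rw [Finset.sum_congr rfl this, Finset.sum_const_zero]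
    have hint : ∫ ω, ((σ ^ 2 + 1)⁻¹ * (σ⁻¹ * (∑ k, v k * ε ω k) - ξ ω)) ^ 2 ∂P
        = (σ ^ 2 * (σ ^ 2 + 1))⁻¹ := by
      have e : ∀ ω, ((σ ^ 2 + 1)⁻¹ * (σ⁻¹ * (∑ k, v k * ε ω k) - ξ ω)) ^ 2
          = ((σ ^ 2 + 1)⁻¹) ^ 2 * ((σ⁻¹ * σ⁻¹) * ((∑ k, v k * ε ω k) * (∑ k, v k * ε ω k))
            - (2 * σ⁻¹) * ((∑ k, v k * ε ω k) * ξ ω) + ξ ω ^ 2) := by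
        intro ω
        ring
      simp only [e]
      have j1 : Integrable (fun ω => σ⁻¹ * σ⁻¹ * ((∑ k, v k * ε ω k) * (∑ k, v k * ε ω k))) P :=
        hSSint.const_mul _
      have j2 : Integrable (fun ω => 2 * σ⁻¹ * ((∑ k, v k * ε ω k) * ξ ω)) P :=
        hSξint.const_mul _
      have j12 : Integrable (fun ω => σ⁻¹ * σ⁻¹ * ((∑ k, v k * ε ω k) * (∑ k, v k * ε ω k))
          - 2 * σ⁻¹ * ((∑ k, v k * ε ω k) * ξ ω)) P := j1.sub j2
      rw [integral_const_mul, integral_add j12 hξ2int,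
        integral_sub j1 j2, integral_const_mul,
        integral_const_mul, hSS, hSξ, hξ2]
      field_simp
      ring
    ext i j
    simp only [Matrix.of_apply]
    have hprod : ∀ ω, p ω i * p ω j = ((Φᵀ *ᵥ v) i * (Φᵀ *ᵥ v) j)
        * ((σ ^ 2 + 1)⁻¹ * (σ⁻¹ * (∑ k, v k * ε ω k) - ξ ω)) ^ 2 := by
      intro ω
      rw [hpu ω]
      simp only [Pi.smul_apply, smul_eq_mul]
      ring
    simp only [hprod]
    rw [integral_const_mul, hint]
    -- now the matrix entry computation
    have hmm : (Φᵀ * vecMulVec v v * Φ) i j = (Φᵀ *ᵥ v) i * (Φᵀ *ᵥ v) j := by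
      simp only [Matrix.mul_apply, vecMulVec_apply, transpose_apply, hu]
      have h1 : ∀ l, (∑ k, Φ k i * (v k * v l)) = (∑ k, Φ k i * v k) * v l := by
        intro l
        rw [Finset.sum_mul]
        exact Finset.sum_congr rfl fun k _ => by ring
      rw [show (∑ l, (∑ k, Φ k i * (v k * v l)) * Φ l j)
          = ∑ l, (∑ k, Φ k i * v k) * (v l * Φ l j) from
        Finset.sum_congr rfl fun l _ => by rw [h1 l]; ring]
      rw [← Finset.mul_sum]
      congr 1
      exact Finset.sum_congr rfl fun l _ => by ring
    rw [Matrix.smul_apply, hmm, smul_eq_mul]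
    ring
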